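/- Let (X, 𝒜, μ) be a measure space with μ a finite measure, let q_a < q_b be real numbers, let f : X → ℝ be integrable, and let q̄, q : X → ℝ be measurable with q_a ≤ q̄(x) ≤ q_b and q_a ≤ q(x) ≤ q_b for μ-a.e. x. Assume the sign condition: for μ-a.e. x, f(x) ≥ 0 if q̄(x) = q_a, f(x) ≤ 0 if q̄(x) = q_b, and f(x) = 0 if q_a < q̄(x) < q_b. Let C > 0 and κ > 0 and assume (μ({x : |f(x)| ≤ ε})).toReal ≤ C·ε^κ for all ε > 0. Then, writing N = ∫ |q − q̄| dμ, it holds ∫ f·(q − q̄) dμ ≥ (1/2) · (2·C·(q_b − q_a))^(−1/κ) · N^(1 + 1/κ). -/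

import Mathlib

open MeasureTheory Filter Set Real

/-- Remark 3.10 / Proposition 3.6 with `Ψ(ε) = C ε^κ`: the growth estimate
`∫ f (q − q̄) ≥ (1/2) (2 C (q_b − q_a))^(−1/κ) · N^(1 + 1/κ)` with
`N = ∫ |q − q̄|`. -/
theorem growth_estimate_power
    {X : Type*} [MeasurableSpace X] (μ : Measure X) [IsFiniteMeasure μ]
    (qa qb : ℝ) (hqab : qa < qb)
    (f : X → ℝ) (hf : Integrable f μ)
    (qbar q : X → ℝ) (hqbar : Measurable qbar) (hq : Measurable q)
    (hqbar_mem : ∀ᵐ x ∂μ, qa ≤ qbar x ∧ qbar x ≤ qb)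
    (hq_mem : ∀ᵐ x ∂μ, qa ≤ q x ∧ q x ≤ qb)
    (hsign : ∀ᵐ x ∂μ,
      (qbar x = qa → 0 ≤ f x) ∧
      (qbar x = qb → f x ≤ 0) ∧
      (qa < qbar x → qbar x < qb → f x = 0))
    (C κ : ℝ) (hC : 0 < C) (hκ : 0 < κ)
    (hstruct : ∀ ε > (0 : ℝ), (μ {x | |f x| ≤ ε}).toReal ≤ C * ε ^ κ) :
    (1 / 2) * (2 * C * (qb - qa)) ^ (-1 / κ)
        * (∫ x, |q x - qbar x| ∂μ) ^ (1 + 1 / κ)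
      ≤ ∫ x, f x * (q x - qbar x) ∂μ := by
  obtain ⟨f', hf'meas, hff'⟩ : ∃ f', StronglyMeasurable f' ∧ f =ᵐ[μ] f' :=
    ⟨hf.1.mk f, hf.1.stronglyMeasurable_mk, hf.1.ae_eq_mk⟩
  set g : X → ℝ := fun x => |q x - qbar x| with hgdef
  have hgmeas : Measurable g := (hq.sub hqbar).abs
  have hg0 : ∀ x, 0 ≤ g x := fun x => abs_nonneg _
  have hgbd : ∀ᵐ x ∂μ, g x ≤ qb - qa := by
    filter_upwards [hqbar_mem, hq_mem] with x hb hm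
    simp only [hgdef, abs_le]
    constructor <;> [linarith [hb.1, hb.2, hm.1, hm.2]; linarith [hb.1, hb.2, hm.1, hm.2]]
  have hgint : Integrable g μ := by
    apply Integrable.mono' (integrable_const (qb - qa)) hgmeas.aestronglyMeasurable
    filter_upwards [hgbd] with x hx
    rw [Real.norm_eq_abs, abs_abs]
    exact hx
  have hprod_eq : (fun x => f x * (q x - qbar x)) =ᵐ[μ] fun x => |f x| * g x := by
    filter_upwards [hsign, hqbar_mem, hq_mem] with x hs hb hm
    rcases eq_or_lt_of_le hb.1 with h1 | h1
    · have hfx : 0 ≤ f x := hs.1 h1.symm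
      have hd : 0 ≤ q x - qbar x := by rw [← h1]; linarith [hm.1]
      simp only [hgdef]
      rw [abs_of_nonneg hfx, abs_of_nonneg hd]
    · rcases eq_or_lt_of_le hb.2 with h2 | h2
      · have hfx : f x ≤ 0 := hs.2.1 h2
        have hd : q x - qbar x ≤ 0 := by rw [h2]; linarith [hm.2]
        simp only [hgdef]
        rw [abs_of_nonpos hfx, abs_of_nonpos hd]; ring
      · have hfx : f x = 0 := hs.2.2 h1 h2
        simp [hfx]
  have hPint : Integrable (fun x => |f x| * g x) μ := by
    apply Integrable.mono' (hf.abs.const_mul (qb - qa))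
      (hf.abs.1.mul hgmeas.aestronglyMeasurable)
    filter_upwards [hgbd] with x hx
    simp only [Pi.mul_apply]
    rw [Real.norm_eq_abs, abs_mul, abs_abs, abs_of_nonneg (hg0 x)]
    calc |f x| * g x ≤ |f x| * (qb - qa) := by
          exact mul_le_mul_of_nonneg_left hx (abs_nonneg _)
      _ = (qb - qa) * |f x| := by ring
  have hIeq : ∫ x, f x * (q x - qbar x) ∂μ = ∫ x, |f x| * g x ∂μ :=
    integral_congr_ae hprod_eq
  set N := ∫ x, g x ∂μ with hNdef
  have hN0 : 0 ≤ N := integral_nonneg hg0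
  rcases eq_or_lt_of_le hN0 with hN | hN
  · rw [← hN, Real.zero_rpow (by positivity), mul_zero, hIeq]
    exact integral_nonneg fun x => mul_nonneg (abs_nonneg _) (hg0 x)
  · set D : ℝ := 2 * C * (qb - qa) with hDdef
    have hD : 0 < D := by
      apply mul_pos (by linarith) (by linarith)
    set ε : ℝ := (N / D) ^ (1 / κ) with hεdef
    have hε : 0 < ε := Real.rpow_pos_of_pos (div_pos hN hD) _
    have hεκ : ε ^ κ = N / D := by
      rw [hεdef, ← Real.rpow_mul (div_pos hN hD).le, one_div_mul_cancel hκ.ne',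
        Real.rpow_one]
    have hS : MeasurableSet {x | |f' x| ≤ ε} :=
      measurableSet_le hf'meas.measurable.abs measurable_const
    set S := {x | |f' x| ≤ ε} with hSdef
    have hμS : (μ S).toReal ≤ C * ε ^ κ := by
      have hset : S =ᵐ[μ] {x | |f x| ≤ ε} := by
        rw [Filter.eventuallyEq_set]
        filter_upwards [hff'] with x hx
        simp [hSdef, Set.mem_setOf_eq, hx]
      rw [measure_congr hset]
      exact hstruct ε hε
    have hlow : ∀ᵐ x ∂μ,
        ε * g x - ε * (qb - qa) * S.indicator (fun _ => (1:ℝ)) x ≤ |f x| * g x := by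
      filter_upwards [hgbd, hff'] with x hgx hfx
      by_cases hxS : x ∈ S
      · rw [Set.indicator_of_mem hxS]
        nlinarith [abs_nonneg (f x), hg0 x, hε.le]
      · rw [Set.indicator_of_notMem hxS]
        have hεf : ε < |f x| := by
          rw [hfx]
          exact lt_of_not_ge hxS
        nlinarith [hg0 x]
    have hindint : Integrable (fun x => ε * g x - ε * (qb - qa) * S.indicator (fun _ => (1:ℝ)) x) μ := by
      exact (hgint.const_mul ε).sub (((integrable_const (1:ℝ)).indicator hS).const_mul _)
    have hmain : ε * N - ε * (qb - qa) * (μ S).toReal ≤ ∫ x, |f x| * g x ∂μ := by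
      have := integral_mono_ae hindint hPint hlow
      rw [integral_sub (hgint.const_mul ε) (((integrable_const (1:ℝ)).indicator hS).const_mul _),
        integral_const_mul, integral_const_mul, integral_indicator_const _ hS] at this
      simpa [← hNdef, Measure.real_def] using this
    have hhalf : ε * (qb - qa) * (C * ε ^ κ) = ε * N / 2 := by
      rw [hεκ, hDdef]
      have hqne : qb - qa ≠ 0 := sub_ne_zero.mpr hqab.ne'
      field_simp
    have hfin : ε * N / 2 ≤ ∫ x, |f x| * g x ∂μ := by
      have h1 : ε * (qb - qa) * (μ S).toReal ≤ ε * (qb - qa) * (C * ε ^ κ) := by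
        exact mul_le_mul_of_nonneg_left hμS (mul_nonneg hε.le (by linarith))
      calc ε * N / 2 = ε * N - ε * N / 2 := by ring
        _ ≤ ε * N - ε * (qb - qa) * (μ S).toReal := by rw [← hhalf]; linarith
        _ ≤ _ := hmain
    have hLHS : (1 / 2 : ℝ) * D ^ (-1 / κ) * N ^ (1 + 1 / κ) = ε * N / 2 := by
      rw [Real.rpow_add hN, Real.rpow_one, hεdef, Real.div_rpow hN0 hD.le,
        neg_div, Real.rpow_neg hD.le]
      ring
    rw [hIeq]
    calc (1 / 2 : ℝ) * D ^ (-1 / κ) * N ^ (1 + 1 / κ) = ε * N / 2 := hLHS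
      _ ≤ _ := hfin
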